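/- Let λ be a partition with at most m parts such that λ_1 + l(λ) ≤ p, and let μ be a partition with at most m parts such that μ ⪯ λ. Then μ_k ≤ λ_k for all k ∈ {1,…,m}, and |λ| − |μ| is even. -/

import Mathlib

/-- ρ = (m, m-1, …, 1); with 0-indexed coordinates, ρ k = m - k. -/
def rho {m : ℕ} : Fin m → ℤ := fun k => (m : ℤ) - (k : ℕ)

/-- A partition with at most m parts: weakly decreasing and nonnegative entries. -/
def IsPartitionVec {m : ℕ} (lam : Fin m → ℤ) : Prop :=
  (∀ i j : Fin m, i ≤ j → lam j ≤ lam i) ∧ ∀ i, 0 ≤ lam i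

/-- The length of a partition: the number of nonzero entries. -/
def plen {m : ℕ} (lam : Fin m → ℤ) : ℕ :=
  (Finset.univ.filter fun i => lam i ≠ 0).card

/-- A vector is regular if all entries are nonzero and no two entries have
the same absolute value. -/
def Regular {m : ℕ} (v : Fin m → ℤ) : Prop :=
  (∀ k, v k ≠ 0) ∧ ∀ k k', k ≠ k' → |v k| ≠ |v k'|

/-- Affine reflection s_{ε_i−ε_j,l}: x ↦ x − a(e_i − e_j), a = x_i − x_j − lp. -/
def sMinus {m : ℕ} (p : ℤ) (i j : Fin m) (l : ℤ) (x : Fin m → ℤ) : Fin m → ℤ :=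
  fun k => x k - (x i - x j - l * p) * ((if k = i then 1 else 0) - (if k = j then 1 else 0))

/-- Affine reflection s_{ε_i+ε_j,l}: x ↦ x − a(e_i + e_j), a = x_i + x_j − lp. -/
def sPlus {m : ℕ} (p : ℤ) (i j : Fin m) (l : ℤ) (x : Fin m → ℤ) : Fin m → ℤ :=
  fun k => x k - (x i + x j - l * p) * ((if k = i then 1 else 0) + (if k = j then 1 else 0))

/-- Affine reflection s_{2ε_i,l}: x ↦ x − 2a·e_i, a = x_i − lp. -/
def sDouble {m : ℕ} (p : ℤ) (i : Fin m) (l : ℤ) (x : Fin m → ℤ) : Fin m → ℤ :=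
  fun k => x k - 2 * (x i - l * p) * (if k = i then 1 else 0)

/-- λ is a p-core: for every i and every l ≥ 1 with (λ+ρ)_i − lp > 0, the number
(λ+ρ)_i − lp occurs as an entry of λ+ρ. -/
def IsPCore {m : ℕ} (p : ℕ) (lam : Fin m → ℤ) : Prop :=
  ∀ (i : Fin m) (l : ℤ), 1 ≤ l → 0 < lam i + rho i - l * p →
    ∃ j : Fin m, lam j + rho j = lam i + rho i - l * p

/-- One step of the order ⪯: mu is obtained from nu by applying a reflection
s_{ε_i+ε_j,l} with 1 ≤ i < j ≤ l(nu), l ≥ 1, (nu+ρ)_i + (nu+ρ)_j − lp ≥ 1,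
such that all entries of s_{ε_i+ε_j,l}(nu+ρ) are pairwise distinct and strictly
positive, followed by a permutation of the coordinates moving only the first
l(nu) coordinates; the result mu is again a partition. -/
def PrecStep {m : ℕ} (p : ℕ) (nu mu : Fin m → ℤ) : Prop :=
  IsPartitionVec mu ∧
  ∃ (i j : Fin m) (l : ℤ) (w : Equiv.Perm (Fin m)),
    i < j ∧ (j : ℕ) < plen nu ∧ 1 ≤ l ∧
    1 ≤ (nu i + rho i) + (nu j + rho j) - l * p ∧
    (∀ k k' : Fin m, k ≠ k' →
      sPlus (p : ℤ) i j l (fun t => nu t + rho t) k ≠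
        sPlus (p : ℤ) i j l (fun t => nu t + rho t) k') ∧
    (∀ k, 0 < sPlus (p : ℤ) i j l (fun t => nu t + rho t) k) ∧
    (∀ k : Fin m, plen nu ≤ (k : ℕ) → w k = k) ∧
    ∀ k, mu k + rho k = sPlus (p : ℤ) i j l (fun t => nu t + rho t) (w k)

/-- μ ⪯ λ: there is a chain λ = λ^1, …, λ^t = μ of partitions, each obtained
from the previous one by a `PrecStep`. -/
def Prec {m : ℕ} (p : ℕ) (mu lam : Fin m → ℤ) : Prop :=
  Relation.ReflTransGen (PrecStep p) lam mu

theorem step_aux {m p : ℕ} {nu mu : Fin m → ℤ} (hnu : IsPartitionVec nu)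
    (h : PrecStep p nu mu) :
    (∀ k, mu k ≤ nu k) ∧ Even ((∑ k, nu k) - (∑ k, mu k)) := by
  obtain ⟨hmu, i, j, l, w, hij, hjlen, hl, ha, hdist, hpos, hfix, heq⟩ := h
  set f : Fin m → ℤ := fun t => nu t + rho t with hf
  have hane : i ≠ j := ne_of_lt hij
  have hsle : ∀ k, sPlus (p:ℤ) i j l f k ≤ f k := by
    intro k
    unfold sPlus
    have h0 : (0:ℤ) ≤ (if k = i then (1:ℤ) else 0) + (if k = j then 1 else 0) := by
      positivity
    have h1 : (1:ℤ) ≤ f i + f j - l * p := ha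
    nlinarith
  have hrho : ∀ s t : Fin m, s ≤ t → rho (m := m) t ≤ rho s := by
    intro s t hst
    unfold rho
    have : (s : ℕ) ≤ (t : ℕ) := hst
    have : ((s : ℕ) : ℤ) ≤ ((t : ℕ) : ℤ) := by exact_mod_cast this
    linarith
  have hfanti : ∀ s t : Fin m, s ≤ t → f t ≤ f s := by
    intro s t hst
    have h1 := hnu.1 s t hst
    have h2 := hrho s t hst
    simp only [hf]
    linarith
  have hle : ∀ k, mu k ≤ nu k := by
    intro k
    have hpig : ∃ t : Fin m, t ≤ k ∧ k ≤ w t := by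
      by_contra hcon
      push_neg at hcon
      have hsub : (Finset.Iic k).image w ⊆ Finset.Iio k := by
        intro x hx
        simp only [Finset.mem_image, Finset.mem_Iic] at hx
        obtain ⟨t, ht, rfl⟩ := hx
        exact Finset.mem_Iio.mpr (hcon t ht)
      have hcard : (Finset.Iic k).card ≤ (Finset.Iio k).card :=
        le_trans (le_of_eq (Finset.card_image_of_injective _ w.injective).symm)
          (Finset.card_le_card hsub)
      rw [Fin.card_Iic, Fin.card_Iio] at hcard
      omega
    obtain ⟨t, htk, hkt⟩ := hpig
    have h1 : mu k + rho k ≤ mu t + rho t := by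
      have := hmu.1 t k htk
      have := hrho t k htk
      linarith
    have h2 : mu t + rho t = sPlus (p:ℤ) i j l f (w t) := heq t
    have h3 : sPlus (p:ℤ) i j l f (w t) ≤ f (w t) := hsle (w t)
    have h4 : f (w t) ≤ f k := hfanti k (w t) hkt
    have h5 : f k = nu k + rho k := rfl
    have h6 : f (w t) = nu (w t) + rho (w t) := rfl
    linarith
  refine ⟨hle, ?_⟩
  have hsum1 : (∑ k, (mu k + rho k)) = ∑ k, sPlus (p:ℤ) i j l f k := by
    calc (∑ k, (mu k + rho k)) = ∑ k, sPlus (p:ℤ) i j l f (w k) :=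
          Finset.sum_congr rfl (fun k _ => heq k)
      _ = ∑ k, sPlus (p:ℤ) i j l f k := Equiv.sum_comp w _
  have hsum2 : ∑ k, sPlus (p:ℤ) i j l f k
      = (∑ k, f k) - 2 * (f i + f j - l * p) := by
    have hchi : ∑ x : Fin m, ((if x = i then (1:ℤ) else 0) + if x = j then 1 else 0) = 2 := by
      rw [Finset.sum_add_distrib]
      simp [Finset.sum_ite_eq']
    unfold sPlus
    rw [Finset.sum_sub_distrib, ← Finset.mul_sum, hchi]
    ring
  have hsum3 : (∑ k, (mu k + rho k)) = (∑ k, (nu k + rho k)) - 2 * (f i + f j - l * p) := by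
    rw [hsum1, hsum2]
  rw [Finset.sum_add_distrib, Finset.sum_add_distrib] at hsum3
  exact ⟨f i + f j - l * p, by linarith⟩

theorem statement8 (m p : ℕ) (hp : p.Prime) (hodd : Odd p) (hm : 0 < m)
    (lam mu : Fin m → ℤ) (hlam : IsPartitionVec lam) (hmu : IsPartitionVec mu)
    (hhook : lam ⟨0, hm⟩ + (plen lam : ℤ) ≤ (p : ℤ))
    (hprec : Prec p mu lam) :
    (∀ k, mu k ≤ lam k) ∧ Even ((∑ k, lam k) - (∑ k, mu k)) := by
  clear hmu hhook hp hodd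
  have key : IsPartitionVec mu ∧ (∀ k, mu k ≤ lam k) ∧
      Even ((∑ k, lam k) - (∑ k, mu k)) := by
    induction hprec with
    | refl => exact ⟨hlam, fun k => le_refl _, by simp⟩
    | tail hab hstep ih =>
        obtain ⟨hb, hble, hbev⟩ := ih
        obtain ⟨hle, hev⟩ := step_aux hb hstep
        refine ⟨hstep.1, fun k => le_trans (hle k) (hble k), ?_⟩
        have h2 := hbev.add hev
        convert h2 using 1
        case e'_3 => ring
        case e'_2 => rfl
  exact ⟨key.2.1, key.2.2⟩
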